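/- arXiv:1602.06617 — 2 statements merged into one kernel-verified Lean document; each statement's English description precedes it below -/
import Mathlib

section
/- Let n ≥ 1 and let H_1, H_2 be naive EGK data of length n with Υ_n(H_1) = Υ_n(H_2). Then 𝓕(H_1;Y,X) = 𝓕(H_2;Y,X) in ℚ(x,y). (Consequently, for an EGK datum G of length n the Laurent polynomial 𝓕̃(G;Y,X) := 𝓕(H;Y,X) for any H with Υ_n(H) = G is well defined.) -/
noncomputable section

/-- The ambient field `ℚ(x,y)`. -/
abbrev KK : Type := FractionRing (MvPolynomial (Fin 2) ℚ)

/-- `x = X^{1/2}`. -/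
def xx : KK := algebraMap (MvPolynomial (Fin 2) ℚ) KK (MvPolynomial.X 0)

/-- `y = Y^{1/2}`. -/
def yy : KK := algebraMap (MvPolynomial (Fin 2) ℚ) KK (MvPolynomial.X 1)

/-- The invariant `𝔢_i` attached to the sequence `a` (indexed from 1). -/
def eInv (a : ℕ → ℕ) (i : ℕ) : ℤ :=
  if Odd i then ((∑ j ∈ Finset.Icc 1 i, a j : ℕ) : ℤ)
  else 2 * (((∑ j ∈ Finset.Icc 1 i, a j : ℕ) / 2 : ℕ) : ℤ)

/-- `C(e,ẽ,ξ;Y,X)`, written in terms of the square root `u = X^{1/2}` (and `Y = yy²`). -/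
def Cfun (e et : ℤ) (ξ : ℤ) (u : KK) : KK :=
  yy ^ et * u ^ (-(e - et) - 2) * (1 - (ξ : KK) * yy ^ (-2 : ℤ) * u ^ (2 : ℤ)) /
    (u ^ (-2 : ℤ) - u ^ (2 : ℤ))

/-- `D(e,ẽ,ξ;Y,X)`, in terms of `u = X^{1/2}`. -/
def Dfun (e et : ℤ) (ξ : ℤ) (u : KK) : KK :=
  yy ^ et * u ^ (-(e - et)) / (1 - (ξ : KK) * u ^ (2 : ℤ))

/-- `C_i`: equals `C` if `i` is even and `D` if `i` is odd. -/
def CD (i : ℕ) (e et : ℤ) (ξ : ℤ) (u : KK) : KK :=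
  if Even i then Cfun e et ξ u else Dfun e et ξ u

/-- The rational function `𝓕(H;Y,X)`, as a function of `u = X^{1/2}` (with `Y = yy²` fixed). -/
def Fcal (a : ℕ → ℕ) (ε : ℕ → ℤ) : ℕ → KK → KK
  | 0, _ => 1
  | 1, u => ∑ i ∈ Finset.range (a 1 + 1), u ^ (2 * (i : ℤ) - (a 1 : ℤ))
  | (m + 2), u =>
      CD (m + 2) (eInv a (m + 2)) (eInv a (m + 1))
          (if Even (m + 2) then ε (m + 2) else ε (m + 1)) u
        * Fcal a ε (m + 1) (yy * u)
      + (if Even (m + 2) then 1 else (ε (m + 2) : KK))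
        * CD (m + 2) (eInv a (m + 2)) (eInv a (m + 1))
            (if Even (m + 2) then ε (m + 2) else ε (m + 1)) u⁻¹
        * Fcal a ε (m + 1) (yy * u⁻¹)

/-- A naive EGK datum of length `n` (entries indexed by `1,…,n`). -/
structure IsNaiveEGK (n : ℕ) (a : ℕ → ℕ) (ε : ℕ → ℤ) : Prop where
  mono : ∀ i, 1 ≤ i → i + 1 ≤ n → a i ≤ a (i + 1)
  mem : ∀ i, 1 ≤ i → i ≤ n → ε i = 0 ∨ ε i = 1 ∨ ε i = -1
  n2 : ∀ i, 1 ≤ i → i ≤ n → Even i → (ε i ≠ 0 ↔ Even (∑ j ∈ Finset.Icc 1 i, a j))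
  n3 : ∀ i, 1 ≤ i → i ≤ n → Odd i → ε i ≠ 0
  n4 : 1 ≤ n → ε 1 = 1
  n5 : ∀ i, 3 ≤ i → i ≤ n → Odd i → Even (∑ j ∈ Finset.Icc 1 (i - 1), a j) →
    ε i = ε (i - 1) ^ (a i + a (i - 1)) * ε (i - 2)
/-- `n_s* = n_1 + ⋯ + n_s`. -/
def nstar (nn : ℕ → ℕ) (s : ℕ) : ℕ := ∑ i ∈ Finset.Icc 1 s, nn i

/-- An EGK datum `(n_1,…,n_r; m_1,…,m_r; ζ_1,…,ζ_r)` of length `n` (indexed from 1). -/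
structure IsEGK (n r : ℕ) (nn mm : ℕ → ℕ) (ζ : ℕ → ℤ) : Prop where
  r_pos : 1 ≤ r
  nn_pos : ∀ s, 1 ≤ s → s ≤ r → 1 ≤ nn s
  total : nstar nn r = n
  m_mono : ∀ s t, 1 ≤ s → s < t → t ≤ r → mm s < mm t
  zeta_mem : ∀ s, 1 ≤ s → s ≤ r → ζ s = 0 ∨ ζ s = 1 ∨ ζ s = -1
  e2 : ∀ s, 1 ≤ s → s ≤ r → Even (nstar nn s) →
    (ζ s ≠ 0 ↔ Even (∑ i ∈ Finset.Icc 1 s, mm i * nn i))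
  e3_ne : ∀ s, 1 ≤ s → s ≤ r → Odd (nstar nn s) → ζ s ≠ 0
  e3a : ∀ s, 1 ≤ s → s ≤ r → Odd (nstar nn s) →
    (∀ i, 1 ≤ i → i < s → Even (nstar nn i)) →
    ζ s = ∏ i ∈ Finset.Icc 1 (s - 1), ζ i ^ (mm (i + 1) + mm i)
  e3b : ∀ s t, 1 ≤ t → t < s → s ≤ r → Odd (nstar nn s) → Odd (nstar nn t) →
    (∀ i, t < i → i < s → Even (nstar nn i)) →
    ζ s = ζ t * ∏ i ∈ Finset.Icc (t + 1) (s - 1), ζ i ^ (mm (i + 1) + mm i)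

/-- `Υ_n(a_1,…,a_n;ε_1,…,ε_n) = (n_1,…,n_r;m_1,…,m_r;ζ_1,…,ζ_r)`:
the sequence `a` consists of `m_1` repeated `n_1` times, …, `m_r` repeated `n_r` times,
with `m_1 < ⋯ < m_r`, and `ζ_s = ε_{n_s*}`. -/
def UpsRel (n : ℕ) (a : ℕ → ℕ) (ε : ℕ → ℤ) (r : ℕ) (nn mm : ℕ → ℕ) (ζ : ℕ → ℤ) : Prop :=
  (∀ s, 1 ≤ s → s ≤ r → 1 ≤ nn s) ∧
  nstar nn r = n ∧
  (∀ s t, 1 ≤ s → s < t → t ≤ r → mm s < mm t) ∧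
  (∀ s j, 1 ≤ s → s ≤ r → nstar nn (s - 1) < j → j ≤ nstar nn s → a j = mm s) ∧
  (∀ s, 1 ≤ s → s ≤ r → ζ s = ε (nstar nn s))
lemma xx_ne : (xx : KK) ≠ 0 := by
  simp only [xx, ne_eq, map_eq_zero_iff _ (IsFractionRing.injective (MvPolynomial (Fin 2) ℚ) KK)]
  exact MvPolynomial.X_ne_zero 0

lemma yy_ne : (yy : KK) ≠ 0 := by
  simp only [yy, ne_eq, map_eq_zero_iff _ (IsFractionRing.injective (MvPolynomial (Fin 2) ℚ) KK)]
  exact MvPolynomial.X_ne_zero 1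

lemma mono_inj (p q p' q' : ℕ) (c : ℚ) 
    (h : (xx:KK)^p * yy^q = algebraMap (MvPolynomial (Fin 2) ℚ) KK (MvPolynomial.C c) * (xx^p' * yy^q')) :
    p = p' ∧ q = q' := by
  have hinj := IsFractionRing.injective (MvPolynomial (Fin 2) ℚ) KK
  have h2 : (MvPolynomial.X 0 : MvPolynomial (Fin 2) ℚ)^p * MvPolynomial.X 1 ^ q 
      = MvPolynomial.C c * (MvPolynomial.X 0 ^ p' * MvPolynomial.X 1 ^ q') := by
    apply hinj
    simpa [xx, yy, map_mul, map_pow] using h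
  rw [MvPolynomial.X_pow_eq_monomial, MvPolynomial.X_pow_eq_monomial,
      MvPolynomial.X_pow_eq_monomial, MvPolynomial.X_pow_eq_monomial,
      MvPolynomial.monomial_mul, MvPolynomial.monomial_mul, MvPolynomial.C_apply,
      MvPolynomial.monomial_mul] at h2
  rw [MvPolynomial.monomial_eq_monomial_iff] at h2
  rcases h2 with ⟨he, -⟩ | ⟨h1, -⟩
  · constructor
    · have := DFunLike.congr_fun he 0
      simpa using this
    · have := DFunLike.congr_fun he 1
      simpa using this
  · simp at h1

lemma zpow_split (v : KK) (hv : v ≠ 0) (i : ℤ) :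
    v^i * v^(((-i).toNat:ℤ)) = v^((i.toNat:ℤ)) := by
  rw [← zpow_add₀ hv]; congr 1; omega

lemma mono_ne_c (i e : ℤ) (he : e ≠ 0) (c : ℚ) :
    yy^i * xx^e ≠ algebraMap (MvPolynomial (Fin 2) ℚ) KK (MvPolynomial.C c) := by
  intro h
  have h2 : (yy^i * xx^e) * (yy^(((-i).toNat:ℤ)) * xx^(((-e).toNat:ℤ)))
      = algebraMap (MvPolynomial (Fin 2) ℚ) KK (MvPolynomial.C c)
        * (yy^(((-i).toNat:ℤ)) * xx^(((-e).toNat:ℤ))) := by rw [h]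
  have h3 : yy^((i.toNat:ℤ)) * xx^((e.toNat:ℤ))
      = algebraMap (MvPolynomial (Fin 2) ℚ) KK (MvPolynomial.C c)
        * (yy^(((-i).toNat:ℤ)) * xx^(((-e).toNat:ℤ))) := by
    rw [← zpow_split yy yy_ne i, ← zpow_split xx xx_ne e]
    rw [← h2]; ring
  rw [zpow_natCast, zpow_natCast, zpow_natCast, zpow_natCast] at h3
  have h4 : (xx:KK)^e.toNat * yy^i.toNat
      = algebraMap (MvPolynomial (Fin 2) ℚ) KK (MvPolynomial.C c) * (xx^(-e).toNat * yy^(-i).toNat) := by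
    rw [mul_comm ((xx:KK)^e.toNat)]; rw [h3]; ring
  obtain ⟨h5, -⟩ := mono_inj _ _ _ _ _ h4
  omega

lemma key_O (E Et et : ℤ) (hE : Et - et = E - Et + 2) (u : KK) (hu : u ≠ 0) :
    Cfun E Et 0 u * Dfun Et et 0 (yy*u)⁻¹ + Cfun E Et 0 u⁻¹ * Dfun Et et 0 (yy*u⁻¹)⁻¹ = 0 := by
  rw [Cfun, Cfun, Dfun, Dfun]
  push_cast
  simp only [inv_zpow', mul_zpow, neg_neg, zero_mul, sub_zero, mul_one, div_one]
  rw [show (u:KK)^(2:ℤ) - u^(-2:ℤ) = -(u^(-2:ℤ) - u^(2:ℤ)) by ring]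
  rw [div_neg, div_mul_eq_mul_div, neg_mul, div_mul_eq_mul_div, ← sub_eq_add_neg,
      div_sub_div_same, div_eq_zero_iff]
  left
  rw [sub_eq_zero, hE]
  ring_nf

lemma key_E1 (E Et et : ℤ) (ξ ξ' : ℤ) (u : KK)
    (h1 : 1 - (ξ:KK) * u^(2:ℤ) ≠ 0) (h2 : 1 - (ξ':KK) * u^(2:ℤ) ≠ 0) :
    Dfun E Et ξ u * Cfun Et et ξ (yy*u) = Dfun E Et ξ' u * Cfun Et et ξ' (yy*u) := by
  have key : ∀ ζ : ℤ, (1 - (ζ:KK) * u^(2:ℤ) ≠ 0) →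
      Dfun E Et ζ u * Cfun Et et ζ (yy*u)
      = yy^Et * u^(-(E-Et)) * (yy^et * (yy*u)^(-(Et-et)-2)) / ((yy*u)^(-2:ℤ) - (yy*u)^(2:ℤ)) := by
    intro ζ hζ
    rw [Dfun, Cfun]
    have : (1 : KK) - (ζ:KK) * yy^(-2:ℤ) * (yy*u)^(2:ℤ) = 1 - (ζ:KK) * u^(2:ℤ) := by
      have hyy : (yy:KK)^(-2:ℤ) * yy^(2:ℤ) = 1 := by rw [← zpow_add₀ yy_ne]; norm_num
      rw [mul_zpow]
      linear_combination (-(ζ:KK)*u^(2:ℤ))*hyy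
    rw [this]
    rw [div_mul_div_comm]
    rw [show yy ^ Et * u ^ (-(E - Et)) * (yy ^ et * (yy*u) ^ (-(Et - et) - 2) * (1 - (ζ:KK) * u^(2:ℤ)))
        = (1 - (ζ:KK) * u^(2:ℤ)) * (yy ^ Et * u ^ (-(E - Et)) * (yy ^ et * (yy*u) ^ (-(Et - et) - 2))) from by ring,
       show (1 - (ζ:KK) * u ^ (2:ℤ)) * ((yy*u) ^ (-2:ℤ) - (yy*u) ^ (2:ℤ))
        = (1 - (ζ:KK) * u ^ (2:ℤ)) * (((yy*u) ^ (-2:ℤ) - (yy*u) ^ (2:ℤ))) from by ring]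
    rw [mul_div_mul_left _ _ hζ]
  rw [key ξ h1, key ξ' h2]

set_option maxHeartbeats 1000000 in
lemma hS_aux {K : Type*} [Field K] (v w c : K) (hc : c = 1 ∨ c = -1) (hv : v ≠ 0) (hw : w ≠ 0)
    (h1 : 1 - c*v ≠ 0) (h2 : 1 + c*v ≠ 0) (h3 : 1 - c*v⁻¹ ≠ 0) (h4 : 1 + c*v⁻¹ ≠ 0)
    (h5 : w*v - w⁻¹*v⁻¹ ≠ 0) (h6 : w*v⁻¹ - w⁻¹*v ≠ 0) :
    (1 - c*(w⁻¹*w⁻¹)*v⁻¹)/((1-c*v)*(w*v - w⁻¹*v⁻¹))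
      + (v⁻¹*v⁻¹)*((1-c*(w⁻¹*w⁻¹)*v)/((1-c*v⁻¹)*(w*v⁻¹ - w⁻¹*v)))
    = (1 - (-c)*(w⁻¹*w⁻¹)*v⁻¹)/((1-(-c)*v)*(w*v - w⁻¹*v⁻¹))
      + (v⁻¹*v⁻¹)*((1-(-c)*(w⁻¹*w⁻¹)*v)/((1-(-c)*v⁻¹)*(w*v⁻¹ - w⁻¹*v))) := by
  rw [show (1:K) - (-c)*v = 1 + c*v from by ring, show (1:K) - (-c)*v⁻¹ = 1 + c*v⁻¹ from by ring]
  have hB := mul_ne_zero h1 h5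
  have hD := mul_ne_zero h3 h6
  have hB' := mul_ne_zero h2 h5
  have hD' := mul_ne_zero h4 h6
  rw [mul_div_assoc', mul_div_assoc',
      div_add_div _ _ hB hD, div_add_div _ _ hB' hD',
      div_eq_div_iff (mul_ne_zero hB hD) (mul_ne_zero hB' hD')]
  rcases hc with rfl | rfl <;>
  · field_simp
    ring

lemma key_E3 (E Et et : ℤ) (hg : E - Et = Et - et) (ξ ξ' : ℤ) (hξ : ξ = 1 ∨ ξ = -1)
    (hξ' : ξ' = -ξ) (u : KK) (hu : u ≠ 0)
    (h1 : 1 - (ξ:KK) * u^(2:ℤ) ≠ 0) (h2 : 1 + (ξ:KK) * u^(2:ℤ) ≠ 0)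
    (h3 : 1 - (ξ:KK) * u^(-2:ℤ) ≠ 0) (h4 : 1 + (ξ:KK) * u^(-2:ℤ) ≠ 0)
    (h5 : yy^(2:ℤ)*u^(2:ℤ) - yy^(-2:ℤ)*u^(-2:ℤ) ≠ 0)
    (h6 : yy^(2:ℤ)*u^(-2:ℤ) - yy^(-2:ℤ)*u^(2:ℤ) ≠ 0) :
    Dfun E Et ξ u * Cfun Et et ξ (yy*u)⁻¹ + Dfun E Et ξ u⁻¹ * Cfun Et et ξ (yy*u⁻¹)⁻¹
    = Dfun E Et ξ' u * Cfun Et et ξ' (yy*u)⁻¹ + Dfun E Et ξ' u⁻¹ * Cfun Et et ξ' (yy*u⁻¹)⁻¹ := by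
  have hyy4 : (yy:KK)^(-2:ℤ) * yy^(-2:ℤ) = yy^(-4:ℤ) := by
    rw [← zpow_add₀ yy_ne]; norm_num
  have n1 : ((yy*u)⁻¹ : KK)^(-(Et-et)-2) = yy^(Et-et+2)*u^(Et-et+2) := by
    rw [inv_zpow', mul_zpow, show -(-(Et-et)-2) = Et-et+2 from by ring]
  have n2 : ((yy*u)⁻¹:KK)^(2:ℤ) = yy^(-2:ℤ)*u^(-2:ℤ) := by
    rw [inv_zpow', mul_zpow]
  have n3 : ((yy*u)⁻¹:KK)^(-2:ℤ) = yy^(2:ℤ)*u^(2:ℤ) := by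
    rw [inv_zpow', mul_zpow]; norm_num
  have n1' : ((yy*u⁻¹)⁻¹ : KK)^(-(Et-et)-2) = yy^(Et-et+2)*u^(-(Et-et)-2) := by
    rw [inv_zpow', mul_zpow, inv_zpow', show -(-(Et-et)-2) = Et-et+2 from by ring,
        show -(Et-et+2) = -(Et-et)-2 from by ring]
  have n2' : ((yy*u⁻¹)⁻¹:KK)^(2:ℤ) = yy^(-2:ℤ)*u^(2:ℤ) := by
    rw [inv_zpow', mul_zpow, inv_zpow']; norm_num
  have n3' : ((yy*u⁻¹)⁻¹:KK)^(-2:ℤ) = yy^(2:ℤ)*u^(-2:ℤ) := by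
    rw [inv_zpow', mul_zpow, inv_zpow']; norm_num
  have n5 : ((u:KK)⁻¹)^(-(E-Et)) = u^(E-Et) := by rw [inv_zpow', neg_neg]
  have n6 : ((u:KK)⁻¹)^(2:ℤ) = u^(-2:ℤ) := by rw [inv_zpow']
  have hT1 : ∀ ζ:ℤ, Dfun E Et ζ u * Cfun Et et ζ (yy*u)⁻¹
      = (yy^Et*u^(-(E-Et))*yy^et*yy^(Et-et+2)*u^(Et-et+2)) *
        ((1-(ζ:KK)*yy^(-4:ℤ)*u^(-2:ℤ)) / ((1-(ζ:KK)*u^(2:ℤ))*(yy^(2:ℤ)*u^(2:ℤ) - yy^(-2:ℤ)*u^(-2:ℤ)))) := by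
    intro ζ
    rw [Dfun, Cfun, n1, n2, n3]
    rw [show (1:KK) - (ζ:KK) * yy^(-2:ℤ) * (yy^(-2:ℤ)*u^(-2:ℤ)) = 1 - (ζ:KK)*yy^(-4:ℤ)*u^(-2:ℤ) from by
      linear_combination (-(ζ:KK)*u^(-2:ℤ))*hyy4]
    rw [div_mul_div_comm]
    ring
  have hT2 : ∀ ζ:ℤ, Dfun E Et ζ u⁻¹ * Cfun Et et ζ (yy*u⁻¹)⁻¹
      = (yy^Et*u^(E-Et)*yy^et*yy^(Et-et+2)*u^(-(Et-et)-2)) *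
        ((1-(ζ:KK)*yy^(-4:ℤ)*u^(2:ℤ)) / ((1-(ζ:KK)*u^(-2:ℤ))*(yy^(2:ℤ)*u^(-2:ℤ) - yy^(-2:ℤ)*u^(2:ℤ)))) := by
    intro ζ
    rw [Dfun, Cfun, n1', n2', n3', n5, n6]
    rw [show (1:KK) - (ζ:KK) * yy^(-2:ℤ) * (yy^(-2:ℤ)*u^(2:ℤ)) = 1 - (ζ:KK)*yy^(-4:ℤ)*u^(2:ℤ) from by
      linear_combination (-(ζ:KK)*u^(2:ℤ))*hyy4]
    rw [div_mul_div_comm]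
    ring
  rw [hT1 ξ, hT1 ξ', hT2 ξ, hT2 ξ']
  have hM : (yy:KK)^Et*u^(E-Et)*yy^et*yy^(Et-et+2)*u^(-(Et-et)-2)
      = (yy^Et*u^(-(E-Et))*yy^et*yy^(Et-et+2)*u^(Et-et+2)) * u^(-4:ℤ) := by
    have h7 : (u:KK)^(E-Et)*u^(-(Et-et)-2) = (u^(-(E-Et))*u^(Et-et+2))*u^(-4:ℤ) := by
      rw [← zpow_add₀ hu, ← zpow_add₀ hu, ← zpow_add₀ hu]; congr 1; omega
    linear_combination yy^Et*yy^et*yy^(Et-et+2)*h7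
  rw [hM]
  have hcast : ((ξ':ℤ):KK) = -((ξ:ℤ):KK) := by rw [hξ']; push_cast; ring
  rw [hcast]
  have hc : ((ξ:ℤ):KK) = 1 ∨ ((ξ:ℤ):KK) = -1 := by
    rcases hξ with rfl | rfl
    · left; norm_num
    · right; push_cast; ring
  have b1 : (u:KK)^(-2:ℤ) = (u^(2:ℤ))⁻¹ := by rw [← zpow_neg]
  have b2 : (yy:KK)^(-2:ℤ) = (yy^(2:ℤ))⁻¹ := by rw [← zpow_neg]
  have b3 : (u:KK)^(-4:ℤ) = (u^(2:ℤ))⁻¹*(u^(2:ℤ))⁻¹ := by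
    rw [← mul_inv, ← zpow_add₀ hu, ← zpow_neg]; norm_num
  have b4 : (yy:KK)^(-4:ℤ) = (yy^(2:ℤ))⁻¹*(yy^(2:ℤ))⁻¹ := by
    rw [← mul_inv, ← zpow_add₀ yy_ne, ← zpow_neg]; norm_num
  simp only [b4, b3, b1, b2] at h3 h4 h5 h6 ⊢
  have hS := hS_aux (u^(2:ℤ)) (yy^(2:ℤ)) ((ξ:ℤ):KK) hc (zpow_ne_zero _ hu) (zpow_ne_zero _ yy_ne) h1 h2 h3 h4 h5 h6
  linear_combination (yy^Et*u^(-(E-Et))*yy^et*yy^(Et-et+2)*u^(Et-et+2)) * hS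

def isMono (u : KK) : Prop := ∃ i e : ℤ, (e = 1 ∨ e = -1) ∧ u = yy^i * xx^e

lemma isMono_xx : isMono xx := ⟨0, 1, Or.inl rfl, by simp⟩

lemma isMono.ne_zero {u : KK} (h : isMono u) : u ≠ 0 := by
  obtain ⟨i, e, he, rfl⟩ := h
  exact mul_ne_zero (zpow_ne_zero _ yy_ne) (zpow_ne_zero _ xx_ne)

lemma isMono.yy_mul {u : KK} (h : isMono u) : isMono (yy * u) := by
  obtain ⟨i, e, he, rfl⟩ := h
  exact ⟨i+1, e, he, by rw [zpow_add₀ yy_ne, zpow_one]; ring⟩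

lemma isMono.inv {u : KK} (h : isMono u) : isMono u⁻¹ := by
  obtain ⟨i, e, he, rfl⟩ := h
  refine ⟨-i, -e, by omega, ?_⟩
  rw [mul_inv, ← zpow_neg, ← zpow_neg]

lemma isMono.zpow_ne {u : KK} (h : isMono u) (k : ℤ) (hk : k ≠ 0) (c : ℚ) :
    u^k ≠ algebraMap (MvPolynomial (Fin 2) ℚ) KK (MvPolynomial.C c) := by
  obtain ⟨i, e, he, rfl⟩ := h
  rw [mul_zpow, ← zpow_mul, ← zpow_mul]
  exact mono_ne_c (i*k) (e*k) (by rcases he with rfl | rfl <;> omega) c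

lemma isMono.zpow_ne_one {u : KK} (h : isMono u) (k : ℤ) (hk : k ≠ 0) : u^k ≠ 1 := by
  have h2 := h.zpow_ne k hk 1
  rwa [MvPolynomial.C_1, map_one] at h2

lemma isMono.zpow_ne_negone {u : KK} (h : isMono u) (k : ℤ) (hk : k ≠ 0) : u^k ≠ -1 := by
  have h2 := h.zpow_ne k hk (-1)
  rwa [show (MvPolynomial.C (-1:ℚ)) = -(1: MvPolynomial (Fin 2) ℚ) from by simp, map_neg, map_one] at h2

lemma isMono.one_sub_ne {u : KK} (h : isMono u) (ξ : ℤ) (hξ : ξ = 0 ∨ ξ = 1 ∨ ξ = -1) :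
    1 - (ξ:KK) * u^(2:ℤ) ≠ 0 := by
  rcases hξ with rfl | rfl | rfl
  · simp
  · intro hc
    exact h.zpow_ne_one 2 (by norm_num) (by push_cast at hc; linear_combination -hc)
  · intro hc
    exact h.zpow_ne_negone 2 (by norm_num) (by push_cast at hc; linear_combination hc)

lemma isMono.one_sub_ne' {u : KK} (h : isMono u) (ξ : ℤ) (hξ : ξ = 0 ∨ ξ = 1 ∨ ξ = -1) :
    1 - (ξ:KK) * u^(-2:ℤ) ≠ 0 := by
  have h2 := h.inv.one_sub_ne ξ hξ
  rwa [inv_zpow'] at h2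

lemma isMono.sub_ne {u : KK} (h : isMono u) :
    u^(-2:ℤ) - u^(2:ℤ) ≠ 0 := by
  intro hc
  rw [sub_eq_zero] at hc
  have h4 : u^(-2:ℤ) * u^(2:ℤ) = u^(2:ℤ) * u^(2:ℤ) := by rw [hc]
  rw [← zpow_add₀ h.ne_zero, ← zpow_add₀ h.ne_zero] at h4
  norm_num at h4
  exact h.zpow_ne_one 4 (by norm_num) h4.symm

lemma isMono.sub_ne2 {u : KK} (h : isMono u) :
    yy^(2:ℤ)*u^(2:ℤ) - yy^(-2:ℤ)*u^(-2:ℤ) ≠ 0 := by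
  have hm : isMono (yy*u) := h.yy_mul
  have e1 : (yy*u)^(2:ℤ) = yy^(2:ℤ)*u^(2:ℤ) := mul_zpow _ _ _
  have e2 : (yy*u)^(-2:ℤ) = yy^(-2:ℤ)*u^(-2:ℤ) := mul_zpow _ _ _
  intro hc
  apply hm.sub_ne
  rw [e1, e2, sub_eq_zero]
  rw [sub_eq_zero] at hc
  exact hc.symm
lemma isMono.sub_ne3 {u : KK} (h : isMono u) :
    yy^(2:ℤ)*u^(-2:ℤ) - yy^(-2:ℤ)*u^(2:ℤ) ≠ 0 := by
  have hm := (h.inv).sub_ne2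
  rwa [inv_zpow', inv_zpow', neg_neg] at hm

lemma yy_inv_arg {u : KK} (hu : u ≠ 0) : yy*(yy*u)⁻¹ = u⁻¹ := by
  rw [mul_inv, ← mul_assoc, mul_inv_cancel₀ yy_ne, one_mul]
lemma yy_inv_arg' {u : KK} (hu : u ≠ 0) : yy*(yy*u⁻¹)⁻¹ = u := by
  rw [mul_inv, inv_inv, ← mul_assoc, mul_inv_cancel₀ yy_ne, one_mul]

/-- functional equation -/
lemma Fcal_inv (a : ℕ → ℕ) (ε : ℕ → ℤ) (n : ℕ) (h1 : ε 1 = 1)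
    (hn : Odd n → (ε n)*(ε n) = 1) (u : KK) :
    Fcal a ε n u⁻¹ = (if Even n then 1 else (ε n : KK)) * Fcal a ε n u := by
  match n with
  | 0 => simp [Fcal]
  | 1 =>
    rw [if_neg (by simp), h1]
    push_cast
    rw [one_mul]
    simp only [Fcal]
    rw [← Finset.sum_range_reflect]
    apply Finset.sum_congr rfl
    intro i hi
    rw [Finset.mem_range] at hi
    rw [inv_zpow']
    congr 1
    omega
  | (m+2) =>
    rw [show Fcal a ε (m+2) u⁻¹ = CD (m + 2) (eInv a (m + 2)) (eInv a (m + 1))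
          (if Even (m + 2) then ε (m + 2) else ε (m + 1)) u⁻¹
        * Fcal a ε (m + 1) (yy * u⁻¹)
      + (if Even (m + 2) then 1 else (ε (m + 2) : KK))
        * CD (m + 2) (eInv a (m + 2)) (eInv a (m + 1))
            (if Even (m + 2) then ε (m + 2) else ε (m + 1)) (u⁻¹)⁻¹
        * Fcal a ε (m + 1) (yy * (u⁻¹)⁻¹) from rfl]
    rw [inv_inv]
    rw [show Fcal a ε (m+2) u = CD (m + 2) (eInv a (m + 2)) (eInv a (m + 1))
          (if Even (m + 2) then ε (m + 2) else ε (m + 1)) u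
        * Fcal a ε (m + 1) (yy * u)
      + (if Even (m + 2) then 1 else (ε (m + 2) : KK))
        * CD (m + 2) (eInv a (m + 2)) (eInv a (m + 1))
            (if Even (m + 2) then ε (m + 2) else ε (m + 1)) u⁻¹
        * Fcal a ε (m + 1) (yy * u⁻¹) from rfl]
    by_cases hp : Even (m+2)
    · rw [if_pos hp, if_pos hp]
      ring
    · rw [if_neg hp, if_neg hp]
      have hsq : ((ε (m+2) : KK)) * ((ε (m+2) : KK)) = 1 := by
        exact_mod_cast congrArg (Int.cast : ℤ → KK) (hn (Nat.not_even_iff_odd.mp hp))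
      linear_combination (-(CD (m + 2) (eInv a (m + 2)) (eInv a (m + 1)) (ε (m + 1)) u⁻¹
        * Fcal a ε (m + 1) (yy * u⁻¹))) * hsq

lemma eInv_congr (a a' : ℕ → ℕ) (i : ℕ) (h : ∀ j, 1 ≤ j → j ≤ i → a j = a' j) :
    eInv a i = eInv a' i := by
  have : (∑ j ∈ Finset.Icc 1 i, a j) = ∑ j ∈ Finset.Icc 1 i, a' j := by
    apply Finset.sum_congr rfl
    intro j hj
    rw [Finset.mem_Icc] at hj
    exact h j hj.1 hj.2
  rw [eInv, eInv, this]

lemma Fcal_congr (a a' : ℕ → ℕ) (ε ε' : ℕ → ℤ) (n : ℕ)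
    (ha : ∀ j, 1 ≤ j → j ≤ n → a j = a' j) (he : ∀ j, 1 ≤ j → j ≤ n → ε j = ε' j) :
    ∀ u : KK, Fcal a ε n u = Fcal a' ε' n u := by
  match n with
  | 0 => intro u; rfl
  | 1 => intro u; simp only [Fcal, ha 1 le_rfl le_rfl]
  | (m+2) =>
    intro u
    have IH := Fcal_congr a a' ε ε' (m+1)
      (fun j h1 h2 => ha j h1 (by omega)) (fun j h1 h2 => he j h1 (by omega))
    simp only [Fcal]
    rw [IH, IH, eInv_congr a a' (m+2) ha, eInv_congr a a' (m+1) (fun j h1 h2 => ha j h1 (by omega)),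
        he (m+2) (by omega) le_rfl, he (m+1) (by omega) (by omega)]

def Ssum (a : ℕ → ℕ) (k : ℕ) : ℕ := ∑ j ∈ Finset.Icc 1 k, a j

lemma Ssum_succ (a : ℕ → ℕ) (k : ℕ) : Ssum a (k+1) = Ssum a k + a (k+1) := by
  rw [Ssum, Ssum, Finset.sum_Icc_succ_top (by omega : 1 ≤ k+1)]

section Core
variable {n : ℕ} {a : ℕ → ℕ} {ε ε' : ℕ → ℤ}
variable (hN : IsNaiveEGK n a ε) (hN' : IsNaiveEGK n a ε')
variable (hblk : ∀ k, 1 ≤ k → k ≤ n → ε k ≠ ε' k → k + 1 ≤ n ∧ a (k+1) = a k)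

include hN hN'

lemma diff_ge2 : ∀ k, 1 ≤ k → k ≤ n → ε k ≠ ε' k → 2 ≤ k := by
  intro k h1 h2 hne
  by_contra h
  have hk1 : k = 1 := by omega
  subst hk1
  rw [hN.n4 h2, hN'.n4 h2] at hne
  exact hne rfl

lemma even_diff : ∀ k, 1 ≤ k → k ≤ n → Even k → ε k ≠ ε' k →
    Even (Ssum a k) ∧ (ε k = 1 ∨ ε k = -1) ∧ ε' k = -ε k := by
  intro k h1 h2 hev hne
  by_cases hs : Even (Ssum a k)
  · have he1 : ε k ≠ 0 := (hN.n2 k h1 h2 hev).mpr hs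
    have he2 : ε' k ≠ 0 := (hN'.n2 k h1 h2 hev).mpr hs
    have m1 := hN.mem k h1 h2
    have m2 := hN'.mem k h1 h2
    refine ⟨hs, ?_, ?_⟩ <;> omega
  · exfalso
    have he1 : ε k = 0 := by
      by_contra h; exact hs ((hN.n2 k h1 h2 hev).mp h)
    have he2 : ε' k = 0 := by
      by_contra h; exact hs ((hN'.n2 k h1 h2 hev).mp h)
    omega

include hblk

lemma odd_diff : ∀ k, k ≤ n → Odd k → ε k ≠ ε' k → ¬ Even (Ssum a (k-1)) := by
  intro k
  induction k using Nat.strong_induction_on with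
  | _ k IH =>
  intro hk hodd hne hSe
  have h1 : 1 ≤ k := by rcases hodd with ⟨t, ht⟩; omega
  have h3 : 3 ≤ k := by
    have h2 := diff_ge2 hN hN' k h1 hk hne
    rcases hodd with ⟨t, ht⟩; omega
  obtain ⟨j, rfl⟩ : ∃ j, k = j + 3 := ⟨k - 3, by omega⟩
  have hSe' : Even (Ssum a (j+2)) := hSe
  have e5 : ε (j+3) = ε (j+2) ^ (a (j+3) + a (j+2)) * ε (j+1) := hN.n5 (j+3) h3 hk hodd hSe
  have e5' : ε' (j+3) = ε' (j+2) ^ (a (j+3) + a (j+2)) * ε' (j+1) := hN'.n5 (j+3) h3 hk hodd hSe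
  have hk2odd : Odd (j+1) := by rcases hodd with ⟨t, ht⟩; exact ⟨t-1, by omega⟩
  have step : ε (j+1) ≠ ε' (j+1) → False := by
    intro hd2
    have hS3 : ¬ Even (Ssum a j) := IH (j+1) (by omega) (by omega) hk2odd hd2
    obtain ⟨-, hAA⟩ := hblk (j+1) (by omega) (by omega) hd2
    have hAA2 : a (j+2) = a (j+1) := hAA
    have hs1 : Ssum a (j+2) = Ssum a (j+1) + a (j+2) := Ssum_succ a (j+1)
    have hs2 : Ssum a (j+1) = Ssum a j + a (j+1) := Ssum_succ a j
    rw [Nat.even_iff] at hSe'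
    rw [Nat.even_iff] at hS3
    omega
  by_cases hd1 : ε (j+2) = ε' (j+2)
  · apply step
    intro h
    rw [hd1, h] at e5
    exact hne (e5.trans e5'.symm)
  · have hk1ev : Even (j+2) := by rcases hodd with ⟨t, ht⟩; exact ⟨t, by omega⟩
    obtain ⟨hSek1, hpm, hneg⟩ := even_diff hN hN' (j+2) (by omega) (by omega) hk1ev hd1
    obtain ⟨-, hAA⟩ := hblk (j+2) (by omega) (by omega) hd1
    have hevexp : Even (a (j+3) + a (j+2)) := by rw [hAA]; exact ⟨a (j+2), by ring⟩
    have hpow : ε (j+2) ^ (a (j+3) + a (j+2)) = 1 := by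
      rcases hpm with h | h <;> rw [h]
      · exact one_pow _
      · exact Even.neg_one_pow hevexp
    have hpow' : ε' (j+2) ^ (a (j+3) + a (j+2)) = 1 := by
      rw [hneg, neg_pow, hpow, Even.neg_one_pow hevexp]
      ring
    rw [hpow, one_mul] at e5
    rw [hpow', one_mul] at e5'
    apply step
    intro h
    rw [h] at e5
    exact hne (e5.trans e5'.symm)

lemma adj_diff : ∀ k, 2 ≤ k → k ≤ n → ε k ≠ ε' k → ε (k-1) = ε' (k-1) := by
  intro k h2 hkn hne
  by_contra hd
  obtain ⟨j, rfl⟩ : ∃ j, k = j + 2 := ⟨k - 2, by omega⟩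
  have hd' : ε (j+1) ≠ ε' (j+1) := hd
  rcases Nat.even_or_odd (j+2) with hev | hodd
  · have hk1odd : Odd (j+1) := by rcases hev with ⟨t, ht⟩; exact ⟨t-1, by omega⟩
    have hS2 : ¬ Even (Ssum a j) := odd_diff hN hN' hblk (j+1) (by omega) hk1odd hd'
    obtain ⟨-, hAA⟩ := hblk (j+1) (by omega) (by omega) hd'
    have hAA2 : a (j+2) = a (j+1) := hAA
    obtain ⟨hSk, -, -⟩ := even_diff hN hN' (j+2) (by omega) hkn hev hne
    have hs1 : Ssum a (j+2) = Ssum a (j+1) + a (j+2) := Ssum_succ a (j+1)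
    have hs2 : Ssum a (j+1) = Ssum a j + a (j+1) := Ssum_succ a j
    rw [Nat.even_iff] at hSk
    rw [Nat.even_iff] at hS2
    omega
  · have hS1 : ¬ Even (Ssum a (j+1)) := odd_diff hN hN' hblk (j+2) hkn hodd hne
    have hk1ev : Even (j+1) := by rcases hodd with ⟨t, ht⟩; exact ⟨t, by omega⟩
    obtain ⟨hSek1, -, -⟩ := even_diff hN hN' (j+1) (by omega) (by omega) hk1ev hd'
    exact hS1 hSek1

end Core

lemma eInv_odd (a : ℕ → ℕ) (i : ℕ) (h : Odd i) : eInv a i = (Ssum a i : ℤ) := by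
  rw [eInv, if_pos h]; rfl

lemma eInv_ee (a : ℕ → ℕ) (i : ℕ) (h : Even i) (hs : Even (Ssum a i)) :
    eInv a i = (Ssum a i : ℤ) := by
  rw [eInv, if_neg (Nat.not_odd_iff_even.mpr h)]
  have := Nat.even_iff.mp hs
  rw [show (∑ j ∈ Finset.Icc 1 i, a j) = Ssum a i from rfl]
  omega

lemma eInv_eo (a : ℕ → ℕ) (i : ℕ) (h : Even i) (hs : ¬ Even (Ssum a i)) :
    eInv a i = (Ssum a i : ℤ) - 1 := by
  rw [eInv, if_neg (Nat.not_odd_iff_even.mpr h)]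
  have := Nat.odd_iff.mp (Nat.not_even_iff_odd.mp hs)
  rw [show (∑ j ∈ Finset.Icc 1 i, a j) = Ssum a i from rfl]
  omega

section Main
variable {n : ℕ} {a : ℕ → ℕ} {ε ε' : ℕ → ℤ}

lemma main_ind (hN : IsNaiveEGK n a ε) (hN' : IsNaiveEGK n a ε')
    (hblk : ∀ k, 1 ≤ k → k ≤ n → ε k ≠ ε' k → k + 1 ≤ n ∧ a (k+1) = a k)
    (hn1 : 1 ≤ n) :
    ∀ k, k ≤ n → ε k = ε' k → ∀ u : KK, isMono u → Fcal a ε k u = Fcal a ε' k u := by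
  intro k
  induction k using Nat.strong_induction_on with
  | _ k IH =>
  intro hk hek u hu
  match k, IH, hk, hek with
  | 0, IH, hk, hek => rfl
  | 1, IH, hk, hek => simp only [Fcal]
  | (m+2), IH, hk, hek =>
  by_cases hd : ε (m+1) = ε' (m+1)
  · have IH1 := IH (m+1) (by omega) (by omega) hd
    simp only [Fcal]
    rw [IH1 (yy*u) hu.yy_mul, IH1 (yy*u⁻¹) hu.inv.yy_mul, hd, hek]
  · have h2le : 2 ≤ m+1 := diff_ge2 hN hN' (m+1) (by omega) (by omega) hd
    obtain ⟨p, rfl⟩ : ∃ p, m = p+1 := ⟨m-1, by omega⟩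
    have hd2 : ε (p+2) ≠ ε' (p+2) := hd
    have hek' : ε (p+3) = ε' (p+3) := hek
    have hkn : p+3 ≤ n := hk
    have hadj : ε (p+1) = ε' (p+1) := adj_diff hN hN' hblk (p+2) (by omega) (by omega) hd2
    obtain ⟨-, hba0⟩ := hblk (p+2) (by omega) (by omega) hd2
    have hba : a (p+3) = a (p+2) := hba0
    have IH1 := IH (p+1) (by omega) (by omega) hadj
    have s2 : Ssum a (p+2) = Ssum a (p+1) + a (p+2) := Ssum_succ a (p+1)
    have s3 : Ssum a (p+3) = Ssum a (p+2) + a (p+3) := Ssum_succ a (p+2)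
    have hsq : Odd (p+1) → ε (p+1) * ε (p+1) = 1 := by
      intro hodd
      have h1 := hN.n3 (p+1) (by omega) (by omega) hodd
      have h2 := hN.mem (p+1) (by omega) (by omega)
      rcases h2 with h | h | h
      · omega
      · rw [h]; norm_num
      · rw [h]; norm_num
    have hFE := Fcal_inv a ε (p+1) (hN.n4 hn1) hsq u
    -- unfold both levels
    simp only [Fcal]
    simp only [show p+1+2 = p+3 from rfl, show p+1+1 = p+2 from rfl]
    rw [yy_inv_arg hu.ne_zero, yy_inv_arg' hu.ne_zero]
    rw [← IH1 (yy*(yy*u)) hu.yy_mul.yy_mul, ← IH1 u⁻¹ hu.inv,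
        ← IH1 (yy*(yy*u⁻¹)) hu.inv.yy_mul.yy_mul, ← IH1 u hu]
    rcases Nat.even_or_odd p with hp | hp
    · -- CASE A : difference at even position p+2
      have hE2 : Even (p+2) := by rcases hp with ⟨t, ht⟩; exact ⟨t+1, by omega⟩
      have hO3 : ¬ Even (p+3) := by rcases hp with ⟨t, ht⟩; rw [Nat.even_iff]; omega
      have hO1 : Odd (p+1) := by rcases hp with ⟨t, ht⟩; exact ⟨t, by omega⟩
      have hOdd3 : Odd (p+3) := Nat.not_even_iff_odd.mp hO3
      obtain ⟨hSe2, hpm, hneg⟩ := even_diff hN hN' (p+2) (by omega) (by omega) hE2 hd2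
      -- ε (p+3) = ε (p+1) via N5
      have e5 : ε (p+3) = ε (p+2) ^ (a (p+3) + a (p+2)) * ε (p+1) :=
        hN.n5 (p+3) (by omega) (by omega) hOdd3 hSe2
      have hevexp : Even (a (p+3) + a (p+2)) := by rw [hba]; exact ⟨a (p+2), by ring⟩
      have hpow : ε (p+2) ^ (a (p+3) + a (p+2)) = 1 := by
        rcases hpm with h | h <;> rw [h]
        · exact one_pow _
        · exact Even.neg_one_pow hevexp
      have hsig : ε (p+3) = ε (p+1) := by rw [e5, hpow, one_mul]
      -- eInv relation
      have hg : eInv a (p+3) - eInv a (p+2) = eInv a (p+2) - eInv a (p+1) := by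
        rw [eInv_odd a _ hOdd3, eInv_ee a _ hE2 hSe2, eInv_odd a _ hO1]
        omega
      -- nonvanishing
      have hmem : ε (p+2) = 0 ∨ ε (p+2) = 1 ∨ ε (p+2) = -1 := Or.inr hpm
      have hmem' : ε' (p+2) = 0 ∨ ε' (p+2) = 1 ∨ ε' (p+2) = -1 := by omega
      have h1 := hu.one_sub_ne (ε (p+2)) hmem
      have h2 : 1 + ((ε (p+2):ℤ):KK) * u^(2:ℤ) ≠ 0 := by
        have h0 := hu.one_sub_ne (-(ε (p+2))) (by omega)
        rwa [Int.cast_neg, neg_mul, sub_neg_eq_add] at h0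
      have h3 := hu.one_sub_ne' (ε (p+2)) hmem
      have h4 : 1 + ((ε (p+2):ℤ):KK) * u^(-2:ℤ) ≠ 0 := by
        have h0 := hu.one_sub_ne' (-(ε (p+2))) (by omega)
        rwa [Int.cast_neg, neg_mul, sub_neg_eq_add] at h0
      have key1 := key_E1 (eInv a (p+3)) (eInv a (p+2)) (eInv a (p+1)) (ε (p+2)) (ε' (p+2)) u
        h1 (hu.one_sub_ne _ hmem')
      have key2 := key_E1 (eInv a (p+3)) (eInv a (p+2)) (eInv a (p+1)) (ε (p+2)) (ε' (p+2)) u⁻¹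
        (hu.inv.one_sub_ne _ hmem) (hu.inv.one_sub_ne _ hmem')
      have key3 := key_E3 (eInv a (p+3)) (eInv a (p+2)) (eInv a (p+1)) hg (ε (p+2)) (ε' (p+2))
        hpm hneg u hu.ne_zero h1 h2 h3 h4 hu.sub_ne2 hu.sub_ne3
      have hNE1 : ¬ Even (p+1) := Nat.not_even_iff_odd.mpr hO1
      rw [if_neg hNE1] at hFE
      simp only [CD, if_pos hE2, if_neg hO3]
      rw [hFE, ← hek', hsig]
      linear_combination (Fcal a ε (p+1) (yy*(yy*u))) * key1
        + ((ε (p+1):ℤ):KK) * (Fcal a ε (p+1) (yy*(yy*u⁻¹))) * key2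
        + ((ε (p+1):ℤ):KK) * (Fcal a ε (p+1) u) * key3
    · -- CASE B : difference at odd position p+2
      have hO2 : ¬ Even (p+2) := by rcases hp with ⟨t, ht⟩; rw [Nat.even_iff]; omega
      have hOdd2 : Odd (p+2) := Nat.not_even_iff_odd.mp hO2
      have hE3 : Even (p+3) := by rcases hp with ⟨t, ht⟩; exact ⟨t+2, by omega⟩
      have hE1 : Even (p+1) := by rcases hp with ⟨t, ht⟩; exact ⟨t+1, by omega⟩
      have hS1odd : ¬ Even (Ssum a (p+1)) := odd_diff hN hN' hblk (p+2) (by omega) hOdd2 hd2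
      have hz1 : ε (p+1) = 0 := by
        by_contra h0
        exact hS1odd ((hN.n2 (p+1) (by omega) (by omega) hE1).mp h0)
      have hz1' : ε' (p+1) = 0 := by
        by_contra h0
        exact hS1odd ((hN'.n2 (p+1) (by omega) (by omega) hE1).mp h0)
      have hS3odd : ¬ Even (Ssum a (p+3)) := by
        rw [Nat.even_iff] at hS1odd ⊢
        omega
      have hz3 : ε (p+3) = 0 := by
        by_contra h0
        exact hS3odd ((hN.n2 (p+3) (by omega) (by omega) hE3).mp h0)
      have hz3' : ε' (p+3) = 0 := by
        by_contra h0
        exact hS3odd ((hN'.n2 (p+3) (by omega) (by omega) hE3).mp h0)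
      have hOdd22 : Odd (p+2) := hOdd2
      have hgO : eInv a (p+2) - eInv a (p+1) = eInv a (p+3) - eInv a (p+2) + 2 := by
        rw [eInv_odd a _ hOdd2, eInv_eo a _ hE1 hS1odd, eInv_eo a _ hE3 hS3odd]
        omega
      have keyO := key_O (eInv a (p+3)) (eInv a (p+2)) (eInv a (p+1)) hgO u hu.ne_zero
      rw [if_pos hE1] at hFE
      simp only [CD, if_neg hO2, if_pos hE3]
      rw [hFE, hz1, hz1', hz3, hz3']
      linear_combination (((ε (p+2):ℤ):KK) - ((ε' (p+2):ℤ):KK)) * (Fcal a ε (p+1) u) * keyO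
end Main

lemma nstar_zero (nn : ℕ → ℕ) : nstar nn 0 = 0 := by
  rw [nstar, Finset.Icc_eq_empty (by omega), Finset.sum_empty]

lemma nstar_mono (nn : ℕ → ℕ) {s t : ℕ} (h : s ≤ t) : nstar nn s ≤ nstar nn t :=
  Finset.sum_le_sum_of_subset (Finset.Icc_subset_Icc le_rfl h)

lemma exists_block {n : ℕ} {r : ℕ} {nn : ℕ → ℕ} (htot : nstar nn r = n)
    {j : ℕ} (hj1 : 1 ≤ j) (hj2 : j ≤ n) :
    ∃ s, 1 ≤ s ∧ s ≤ r ∧ nstar nn (s-1) < j ∧ j ≤ nstar nn s := by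
  have hex : ∃ s, j ≤ nstar nn s := ⟨r, by omega⟩
  set s₀ := Nat.find hex with hs₀
  have hspec : j ≤ nstar nn s₀ := Nat.find_spec hex
  have hler : s₀ ≤ r := Nat.find_min' hex (by omega)
  have h1 : 1 ≤ s₀ := by
    rcases Nat.eq_zero_or_pos s₀ with h | h
    · rw [h] at hspec; rw [nstar_zero] at hspec; omega
    · exact h
  refine ⟨s₀, h1, hler, ?_, hspec⟩
  have := Nat.find_min hex (show s₀ - 1 < s₀ from by omega)
  omega

lemma IsNaiveEGK_congr {n : ℕ} {a a' : ℕ → ℕ} {ε : ℕ → ℤ}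
    (h : IsNaiveEGK n a ε) (ha : ∀ j, 1 ≤ j → j ≤ n → a j = a' j) :
    IsNaiveEGK n a' ε := by
  have hsum : ∀ i, i ≤ n → (∑ j ∈ Finset.Icc 1 i, a j) = ∑ j ∈ Finset.Icc 1 i, a' j := by
    intro i hi
    apply Finset.sum_congr rfl
    intro j hj
    rw [Finset.mem_Icc] at hj
    exact ha j hj.1 (hj.2.trans hi)
  constructor
  · intro i h1 h2
    rw [← ha i h1 (by omega), ← ha (i+1) (by omega) h2]
    exact h.mono i h1 h2
  · exact h.mem
  · intro i h1 h2 hev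
    rw [← hsum i h2]
    exact h.n2 i h1 h2 hev
  · exact h.n3
  · exact h.n4
  · intro i h3 hn hodd hev
    rw [← hsum (i-1) (by omega)] at hev
    rw [← ha i (by omega) hn, ← ha (i-1) (by omega) (by omega)]
    exact h.n5 i h3 hn hodd hev


theorem statement_7 (n : ℕ) (hn : 1 ≤ n) (a₁ a₂ : ℕ → ℕ) (ε₁ ε₂ : ℕ → ℤ)
    (h₁ : IsNaiveEGK n a₁ ε₁) (h₂ : IsNaiveEGK n a₂ ε₂)
    (hUps : ∃ (r : ℕ) (nn mm : ℕ → ℕ) (ζ : ℕ → ℤ),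
      UpsRel n a₁ ε₁ r nn mm ζ ∧ UpsRel n a₂ ε₂ r nn mm ζ) :
    Fcal a₁ ε₁ n xx = Fcal a₂ ε₂ n xx := by
  obtain ⟨r, nn, mm, ζ, hU1, hU2⟩ := hUps
  obtain ⟨hpos1, htot1, hmm1, hval1, hpin1⟩ := hU1
  obtain ⟨hpos2, htot2, hmm2, hval2, hpin2⟩ := hU2
  have haa : ∀ j, 1 ≤ j → j ≤ n → a₁ j = a₂ j := by
    intro j hj1 hj2
    obtain ⟨s, hs1, hs2, hs3, hs4⟩ := exists_block htot1 hj1 hj2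
    rw [hval1 s j hs1 hs2 hs3 hs4, hval2 s j hs1 hs2 hs3 hs4]
  have h₂' : IsNaiveEGK n a₁ ε₂ := IsNaiveEGK_congr h₂ (fun j h1 h2 => (haa j h1 h2).symm)
  have hblk : ∀ k, 1 ≤ k → k ≤ n → ε₁ k ≠ ε₂ k → k + 1 ≤ n ∧ a₁ (k+1) = a₁ k := by
    intro k hk1 hk2 hne
    obtain ⟨s, hs1, hs2, hs3, hs4⟩ := exists_block htot1 hk1 hk2
    have hklt : k < nstar nn s := by
      rcases Nat.lt_or_ge k (nstar nn s) with h | h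
      · exact h
      · exfalso
        have hkeq : k = nstar nn s := by omega
        apply hne
        rw [hkeq, ← hpin1 s hs1 hs2, ← hpin2 s hs1 hs2]
    have hsn : nstar nn s ≤ n := htot1 ▸ nstar_mono nn hs2
    refine ⟨by omega, ?_⟩
    rw [hval1 s k hs1 hs2 hs3 (by omega), hval1 s (k+1) hs1 hs2 (by omega) (by omega)]
  have hpinn : ε₁ n = ε₂ n := by
    obtain ⟨s, hs1, hs2, hs3, hs4⟩ := exists_block htot1 (le_refl 1 |>.trans hn) (le_refl n)
    have hsn : nstar nn s ≤ n := htot1 ▸ nstar_mono nn hs2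
    have : nstar nn s = n := by omega
    rw [← this, ← hpin1 s hs1 hs2, ← hpin2 s hs1 hs2]
  have hmain := main_ind h₁ h₂' hblk hn n le_rfl hpinn xx isMono_xx
  rw [hmain]
  exact Fcal_congr a₁ a₂ ε₂ ε₂ n haa (fun _ _ _ => rfl) xx

end
end

section
/- Let H = (a_1,a_2; 1, ξ) be a naive EGK datum of length 2, and set 𝔢_1 = a_1 and 𝔢_2 = 2⌊(a_1+a_2)/2⌋. Then in ℚ(x,y) one has 𝓕(H;Y,X) = Σ_{i=0}^{𝔢_1} Y^i X^{−𝔢_2/2+i} Σ_{j=0}^{𝔢_2/2−i} X^{2j} − ξ Σ_{i=0}^{𝔢_1} Y^{i−1} X^{−𝔢_2/2+i+1} Σ_{j=0}^{𝔢_2/2−i−1} X^{2j}. -/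
noncomputable section

lemma hxx : xx ≠ 0 := by
  simpa [xx] using (IsFractionRing.injective (MvPolynomial (Fin 2) ℚ) KK).ne
    (MvPolynomial.X_ne_zero (0 : Fin 2))

lemma hyy : yy ≠ 0 := by
  simpa [yy] using (IsFractionRing.injective (MvPolynomial (Fin 2) ℚ) KK).ne
    (MvPolynomial.X_ne_zero (1 : Fin 2))

lemma hx4 : xx ^ (4:ℕ) ≠ 1 := by
  intro h
  have h2 : (MvPolynomial.X 0 : MvPolynomial (Fin 2) ℚ) ^ 4 = 1 := by
    apply IsFractionRing.injective (MvPolynomial (Fin 2) ℚ) KK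
    simpa [xx, map_pow] using h
  have := congrArg (MvPolynomial.eval (fun _ => (0:ℚ))) h2
  simp at this

def M (p q : ℤ) : KK := xx ^ p * yy ^ q

lemma M_mul (p q r s : ℤ) : M p q * M r s = M (p+r) (q+s) := by
  simp [M, zpow_add₀ hxx, zpow_add₀ hyy]; ring

lemma M_eq {p q r s : ℤ} (h1 : p = r) (h2 : q = s) : M p q = M r s := by rw [h1, h2]

lemma Mx (k : ℤ) : xx ^ k = M k 0 := by simp [M]
lemma My (k : ℤ) : yy ^ k = M 0 k := by simp [M]
lemma Myx (k : ℤ) : (yy * xx) ^ k = M k k := by rw [M, mul_zpow]; ring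
lemma Myxi (k : ℤ) : (yy * xx⁻¹) ^ k = M (-k) k := by
  rw [M, mul_zpow, inv_zpow, ← zpow_neg]; ring
lemma Mx2 (k : ℤ) : ((xx^2) ^ k : KK) = M (2*k) 0 := by
  rw [M, ← zpow_natCast xx 2, ← zpow_mul]; push_cast; simp
lemma My2 (k : ℤ) : ((yy^2) ^ k : KK) = M 0 (2*k) := by
  rw [M, ← zpow_natCast yy 2, ← zpow_mul]; push_cast; simp
lemma Mx2n (k : ℕ) : ((xx^2) ^ k : KK) = M (2*k) 0 := by
  rw [← zpow_natCast ((xx:KK)^2) k, Mx2]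
lemma My2n (k : ℕ) : ((yy^2) ^ k : KK) = M 0 (2*k) := by
  rw [← zpow_natCast ((yy:KK)^2) k, My2]

def dd : KK := xx ^ (-2:ℤ) - xx ^ (2:ℤ)

lemma hdd : dd ≠ 0 := by
  intro h
  have h1 : xx ^ (-2:ℤ) = xx ^ (2:ℤ) := sub_eq_zero.mp h
  apply hx4
  calc xx ^ (4:ℕ) = xx ^ (2:ℤ) * xx ^ (2:ℤ) := by
        rw [← zpow_add₀ hxx, ← zpow_natCast xx]; norm_num
    _ = xx ^ (-2:ℤ) * xx ^ (2:ℤ) := by rw [h1]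
    _ = 1 := by rw [← zpow_add₀ hxx]; norm_num

lemma ddM : dd = M (-2) 0 - M 2 0 := by simp [M, dd]

lemma geom (n : ℕ) :
    (∑ j ∈ Finset.range n, (xx ^ 2) ^ (2 * j)) * dd = M (-2) 0 - M (4*(n:ℤ)-2) 0 := by
  induction n with
  | zero => simp [M]
  | succ k ih =>
      rw [Finset.sum_range_succ, add_mul, ih]
      have h2 : ((xx ^ 2) ^ (2 * k) : KK) = M (4*(k:ℤ)) 0 := by
        have : ((xx ^ 2) ^ (2 * k) : KK) = xx ^ ((4 * k : ℕ) : ℤ) := by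
          rw [zpow_natCast, ← pow_mul]; ring_nf
        rw [this]; simp [M]
      rw [h2]
      rw [ddM, mul_sub, M_mul, M_mul]
      push_cast
      have e1 : (4*(k:ℤ) + -2) = 4*(k:ℤ)-2 := by ring
      have e2 : (4*(k:ℤ) + 2) = 4*((k:ℤ)+1)-2 := by ring
      rw [e1, e2]
      ring

theorem statement_8 (a : ℕ → ℕ) (ε : ℕ → ℤ) (H : IsNaiveEGK 2 a ε) :
    Fcal a ε 2 xx =
      (∑ i ∈ Finset.range (a 1 + 1),
          (yy ^ 2) ^ i * (xx ^ 2) ^ ((i : ℤ) - (((a 1 + a 2) / 2 : ℕ) : ℤ)) *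
            ∑ j ∈ Finset.range ((a 1 + a 2) / 2 - i + 1), (xx ^ 2) ^ (2 * j)) -
      (ε 2 : KK) *
        ∑ i ∈ Finset.range (a 1 + 1),
          (yy ^ 2) ^ ((i : ℤ) - 1) *
            (xx ^ 2) ^ ((i : ℤ) - (((a 1 + a 2) / 2 : ℕ) : ℤ) + 1) *
            ∑ j ∈ Finset.range ((a 1 + a 2) / 2 - i), (xx ^ 2) ^ (2 * j) := by
  have ha12 : a 1 ≤ a 2 := H.mono 1 le_rfl le_rfl
  have ham : a 1 ≤ (a 1 + a 2) / 2 := by omega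
  have he1 : eInv a 1 = (a 1 : ℤ) := by simp [eInv]
  have he2 : eInv a 2 = 2 * (((a 1 + a 2) / 2 : ℕ) : ℤ) := by
    simp only [eInv]
    rw [if_neg (by decide)]
    rw [show Finset.Icc 1 2 = ({1,2} : Finset ℕ) from rfl]
    rw [Finset.sum_insert (by decide), Finset.sum_singleton]
  simp only [Fcal, CD, if_pos (by decide : Even 2), he1, he2, one_mul, Nat.zero_add]
  set A := a 1 with hA
  set m := (a 1 + a 2) / 2 with hmm
  set c : KK := ((ε 2 : ℤ) : KK) with hc
  apply mul_right_cancel₀ hdd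
  have hC1 : Cfun (2*(m:ℤ)) (A:ℤ) (ε 2) xx
      = (M ((A:ℤ)-2*m-2) A - c * M ((A:ℤ)-2*m) ((A:ℤ)-2)) / dd := by
    rw [Cfun]
    congr 1
    rw [My, Mx, Mx, My, ← hc]
    linear_combination (norm := ring_nf)
      (1 - c * M 0 (-2) * M 2 0) * M_mul 0 (A:ℤ) (-(2*(m:ℤ)-(A:ℤ))-2) 0 -
      c * M 2 0 * M_mul ((A:ℤ)-2*m-2) A 0 (-2) -
      c * M_mul ((A:ℤ)-2*m-2) ((A:ℤ)-2) 2 0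
  have hC2 : Cfun (2*(m:ℤ)) (A:ℤ) (ε 2) xx⁻¹
      = -((M (2*(m:ℤ)-A+2) A - c * M (2*(m:ℤ)-A) ((A:ℤ)-2)) / dd) := by
    rw [Cfun]
    simp only [inv_zpow', neg_neg]
    have hden : xx ^ (2:ℤ) - xx ^ (-2:ℤ) = -dd := by rw [dd]; ring
    rw [hden, div_neg]
    congr 2
    rw [My, Mx, Mx, My, ← hc]
    linear_combination (norm := ring_nf)
      (1 - c * M 0 (-2) * M (-2) 0) * M_mul 0 (A:ℤ) (2*(m:ℤ)-(A:ℤ)+2) 0 -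
      c * M (-2) 0 * M_mul (2*(m:ℤ)-(A:ℤ)+2) A 0 (-2) -
      c * M_mul (2*(m:ℤ)-(A:ℤ)+2) ((A:ℤ)-2) (-2) 0
  rw [hC1, hC2, add_mul]
  have gen1 : ∀ N S : KK, N / dd * S * dd = N * S := by
    intro N S
    rw [div_mul_eq_mul_div, div_mul_eq_mul_div, mul_div_assoc, div_self hdd, mul_one]
  have gen2 : ∀ N S : KK, -(N / dd) * S * dd = -(N * S) := by
    intro N S; rw [neg_mul, neg_mul, gen1]
  rw [gen1, gen2, Finset.mul_sum, Finset.mul_sum]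
  have hterm1 : ∀ i ∈ Finset.range (A+1),
      (M ((A:ℤ)-2*m-2) A - c * M ((A:ℤ)-2*m) ((A:ℤ)-2)) * (yy*xx) ^ (2*(i:ℤ)-(A:ℤ))
      = M (2*(i:ℤ)-2*m-2) (2*i) - c * M (2*(i:ℤ)-2*m) (2*(i:ℤ)-2) := by
    intro i _
    rw [Myx]
    linear_combination (norm := ring_nf)
      M_mul ((A:ℤ)-2*m-2) A (2*(i:ℤ)-A) (2*(i:ℤ)-A) -
      c * M_mul ((A:ℤ)-2*m) ((A:ℤ)-2) (2*(i:ℤ)-A) (2*(i:ℤ)-A)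
  have hterm2 : ∀ i ∈ Finset.range (A+1),
      (M (2*(m:ℤ)-A+2) A - c * M (2*(m:ℤ)-A) ((A:ℤ)-2)) * (yy*xx⁻¹) ^ (2*(i:ℤ)-(A:ℤ))
      = M (2*(m:ℤ)-2*i+2) (2*i) - c * M (2*(m:ℤ)-2*i) (2*(i:ℤ)-2) := by
    intro i _
    rw [Myxi]
    linear_combination (norm := ring_nf)
      M_mul (2*(m:ℤ)-A+2) A (-(2*(i:ℤ)-A)) (2*(i:ℤ)-A) -
      c * M_mul (2*(m:ℤ)-A) ((A:ℤ)-2) (-(2*(i:ℤ)-A)) (2*(i:ℤ)-A)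
  rw [Finset.sum_congr rfl hterm1, Finset.sum_congr rfl hterm2]
  -- now the right-hand side
  have hR1 : ∀ i ∈ Finset.range (A+1),
      ((yy^2)^i * (xx^2)^((i:ℤ)-(m:ℤ)) * ∑ j ∈ Finset.range (m-i+1), (xx^2)^(2*j)) * dd
      = M (2*(i:ℤ)-2*m-2) (2*i) - M (2*(m:ℤ)-2*i+2) (2*i) := by
    intro i hi
    have him : i ≤ m := by
      have := Finset.mem_range.mp hi; omega
    rw [mul_assoc, geom (m-i+1), My2n, Mx2,
      show ((m - i + 1 : ℕ) : ℤ) = (m:ℤ) - (i:ℤ) + 1 from by omega]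
    linear_combination (norm := ring_nf)
      (M (-2) 0 - M (4*((m:ℤ)-(i:ℤ)+1)-2) 0) * M_mul 0 (2*(i:ℤ)) (2*((i:ℤ)-(m:ℤ))) 0 +
      M_mul (2*((i:ℤ)-(m:ℤ))) (2*(i:ℤ)) (-2) 0 -
      M_mul (2*((i:ℤ)-(m:ℤ))) (2*(i:ℤ)) (4*((m:ℤ)-(i:ℤ)+1)-2) 0
  have hR2 : ∀ i ∈ Finset.range (A+1),
      ((yy^2)^((i:ℤ)-1) * (xx^2)^((i:ℤ)-(m:ℤ)+1) * ∑ j ∈ Finset.range (m-i), (xx^2)^(2*j)) * dd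
      = M (2*(i:ℤ)-2*m) (2*(i:ℤ)-2) - M (2*(m:ℤ)-2*i) (2*(i:ℤ)-2) := by
    intro i hi
    have him : i ≤ m := by
      have := Finset.mem_range.mp hi; omega
    rw [mul_assoc, geom (m-i), My2, Mx2,
      show ((m - i : ℕ) : ℤ) = (m:ℤ) - (i:ℤ) from by omega]
    linear_combination (norm := ring_nf)
      (M (-2) 0 - M (4*((m:ℤ)-(i:ℤ))-2) 0) * M_mul 0 (2*((i:ℤ)-1)) (2*((i:ℤ)-(m:ℤ)+1)) 0 +
      M_mul (2*((i:ℤ)-(m:ℤ)+1)) (2*((i:ℤ)-1)) (-2) 0 -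
      M_mul (2*((i:ℤ)-(m:ℤ)+1)) (2*((i:ℤ)-1)) (4*((m:ℤ)-(i:ℤ))-2) 0
  rw [sub_mul, Finset.sum_mul, mul_assoc, Finset.sum_mul,
    Finset.sum_congr rfl hR1, Finset.sum_congr rfl hR2]
  simp only [Finset.sum_sub_distrib, ← Finset.mul_sum]
  ring

end
end
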